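/- arXiv:1411.8002 — 3 statements merged into one kernel-verified Lean document; each statement's English description precedes it below -/
import Mathlib

section
/- Define f(t) = P(ξ₀ ≤ t and there is an odd descent at 0), where (ξ_i)_{i∈ℤ} are i.i.d. with continuous distribution function F; an odd descent at 0 of length 2k+1 means ξ₀ > ξ₁ > ⋯ > ξ_{2k} < ξ_{2k+1}. Then f(t) = 1 − e^{−F(t)}. -/
open MeasureTheory ProbabilityTheory

section Aux

variable {Ω : Type*} [MeasurableSpace Ω] {P : Measure Ω} [IsProbabilityMeasure P]
  {ξ : ℕ → Ω → ℝ} {μ : Measure ℝ} [IsProbabilityMeasure μ]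

private lemma nat_chain {f : ℕ → ℝ} {n : ℕ} (h : ∀ i < n, f (i + 1) < f i) :
    ∀ a b : ℕ, a < b → b ≤ n → f b < f a := by
  intro a b
  induction b with
  | zero => intro hab; omega
  | succ b ih =>
    intro hab hbn
    have hb : f (b + 1) < f b := h b (by omega)
    rcases Nat.lt_or_ge a b with h' | h'
    · exact hb.trans (ih h' (by omega))
    · have : a = b := by omega
      subst this
      exact hb

private lemma joint_law (hmeas : ∀ i, Measurable (ξ i))
    (hindep : iIndepFun ξ P)
    (hlaw : ∀ i, Measure.map (ξ i) P = μ) (m : ℕ) :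
    Measure.map (fun ω (i : Fin m) => ξ (i : ℕ) ω) P = Measure.pi (fun _ : Fin m => μ) := by
  symm
  apply Measure.pi_eq
  intro s hs
  have hY : Measurable (fun ω (i : Fin m) => ξ (i : ℕ) ω) :=
    measurable_pi_lambda _ fun i => hmeas i
  classical
  set sets : ℕ → Set ℝ := fun j => if h : j < m then s ⟨j, h⟩ else Set.univ with hsets
  have hpre : (fun ω (i : Fin m) => ξ (i : ℕ) ω) ⁻¹' Set.pi Set.univ s
      = ⋂ j ∈ Finset.range m, ξ j ⁻¹' sets j := by
    ext ω
    simp only [Set.mem_preimage, Set.mem_pi, Set.mem_univ, forall_true_left, Set.mem_iInter,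
      Finset.mem_range, hsets]
    constructor
    · intro h j hj
      rw [dif_pos hj]
      exact h ⟨j, hj⟩
    · intro h i
      have := h i i.isLt
      rwa [dif_pos i.isLt] at this
  have hmeas_sets : ∀ j ∈ Finset.range m, MeasurableSet (sets j) := by
    intro j hj
    rw [Finset.mem_range] at hj
    simp only [hsets, dif_pos hj]
    exact hs _
  rw [Measure.map_apply hY (MeasurableSet.univ_pi hs), hpre,
    hindep.measure_inter_preimage_eq_mul (Finset.range m) hmeas_sets]
  have hPmu : ∀ j, j < m → P (ξ j ⁻¹' sets j) = μ (sets j) := by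
    intro j hj
    rw [← hlaw j, Measure.map_apply (hmeas j) (hmeas_sets j (Finset.mem_range.mpr hj))]
  rw [← Fin.prod_univ_eq_prod_range (fun j => P (ξ j ⁻¹' sets j)) m]
  refine Finset.prod_congr rfl fun i _ => ?_
  rw [hPmu i i.isLt]
  simp only [hsets, dif_pos i.isLt]

private lemma tie_null (hmeas : ∀ i, Measurable (ξ i))
    (hindep : iIndepFun ξ P)
    (hlaw : ∀ i, Measure.map (ξ i) P = μ)
    (hcont : ∀ x : ℝ, μ {x} = 0) {i j : ℕ} (hij : i ≠ j) :
    P {ω | ξ i ω = ξ j ω} = 0 := by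
  have hind : IndepFun (ξ i) (ξ j) P := hindep.indepFun hij
  have hmap : Measure.map (fun ω => (ξ i ω, ξ j ω)) P = μ.prod μ := by
    rw [(indepFun_iff_map_prod_eq_prod_map_map (hmeas i).aemeasurable
      (hmeas j).aemeasurable).mp hind, hlaw, hlaw]
  have hset : MeasurableSet {p : ℝ × ℝ | p.1 = p.2} :=
    measurableSet_eq_fun measurable_fst measurable_snd
  have heq : {ω | ξ i ω = ξ j ω} = (fun ω => (ξ i ω, ξ j ω)) ⁻¹' {p | p.1 = p.2} := rfl
  have hslice : ∀ x : ℝ, μ (Prod.mk x ⁻¹' {p : ℝ × ℝ | p.1 = p.2}) = 0 := by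
    intro x
    have : Prod.mk x ⁻¹' {p : ℝ × ℝ | p.1 = p.2} = {x} := by
      ext y; simp [eq_comm]
    rw [this]; exact hcont x
  rw [heq, ← Measure.map_apply ((hmeas i).prodMk (hmeas j)) hset, hmap,
    Measure.prod_apply hset]
  simp [hcont, hslice]

set_option linter.unusedSectionVars false in
private lemma desc_prob (hmeas : ∀ i, Measurable (ξ i))
    (hindep : iIndepFun ξ P)
    (hlaw : ∀ i, Measure.map (ξ i) P = μ)
    (hcont : ∀ x : ℝ, μ {x} = 0) (t : ℝ) (n : ℕ) :
    P {ω | ξ 0 ω ≤ t ∧ ∀ i < n, ξ (i + 1) ω < ξ i ω}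
      = μ (Set.Iic t) ^ (n + 1) / (Nat.factorial (n + 1) : ENNReal) := by
  classical
  set m := n + 1 with hm
  set ν : Measure (Fin m → ℝ) := Measure.pi (fun _ => μ) with hν
  set S : Equiv.Perm (Fin m) → Set (Fin m → ℝ) := fun σ =>
    {x | (∀ i, x i ≤ t) ∧ ∀ i j : Fin m, i < j → x (σ j) < x (σ i)} with hS
  have hSmeas : ∀ σ, MeasurableSet (S σ) := by
    intro σ
    have : S σ = (⋂ i, {x : Fin m → ℝ | x i ≤ t}) ∩
        ⋂ i, ⋂ j, ⋂ (_ : i < j), {x : Fin m → ℝ | x (σ j) < x (σ i)} := by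
      ext x
      simp [hS, Set.mem_iInter]
    rw [this]
    exact (MeasurableSet.iInter fun i =>
        measurableSet_le (measurable_pi_apply i) measurable_const).inter
      (MeasurableSet.iInter fun i => MeasurableSet.iInter fun j =>
        MeasurableSet.iInter fun _ =>
          measurableSet_lt (measurable_pi_apply _) (measurable_pi_apply _))
  have hY : Measurable (fun ω (i : Fin m) => ξ (i : ℕ) ω) :=
    measurable_pi_lambda _ fun i => hmeas i
  have hjl := joint_law hmeas hindep hlaw m
  -- each S σ has the same measure as S 1
  have hS_eq : ∀ σ : Equiv.Perm (Fin m), ν (S σ) = ν (S 1) := by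
    intro σ
    have hmp := measurePreserving_piCongrLeft (fun _ : Fin m => μ) (σ.symm : Fin m ≃ Fin m)
    set T := MeasurableEquiv.piCongrLeft (fun _ : Fin m => ℝ) (σ.symm : Fin m ≃ Fin m) with hT
    have hTapp : ∀ (x : Fin m → ℝ) (j : Fin m), T x j = x (σ j) := by
      intro x j
      have := MeasurableEquiv.piCongrLeft_apply_apply (σ.symm : Fin m ≃ Fin m)
        (β := fun _ => ℝ) x (σ j)
      simpa using this
    have hpre : T ⁻¹' (S 1) = S σ := by
      ext x
      simp only [Set.mem_preimage, hS, Set.mem_setOf_eq, Equiv.Perm.coe_one, id_eq]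
      constructor
      · rintro ⟨h1, h2⟩
        refine ⟨fun i => ?_, fun i j hij => ?_⟩
        · have := h1 (σ.symm i)
          rwa [hTapp, Equiv.apply_symm_apply] at this
        · have := h2 i j hij
          rwa [hTapp, hTapp] at this
      · rintro ⟨h1, h2⟩
        refine ⟨fun i => ?_, fun i j hij => ?_⟩
        · rw [hTapp]; exact h1 _
        · rw [hTapp, hTapp]; exact h2 i j hij
    calc ν (S σ) = ν (T ⁻¹' (S 1)) := by rw [hpre]
      _ = ν (S 1) := hmp.measure_preimage (hSmeas 1).nullMeasurableSet
  -- the sets S σ are pairwise disjoint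
  have hdisj : Pairwise (Function.onFun Disjoint S) := by
    intro σ τ hst
    rw [Function.onFun, Set.disjoint_left]
    rintro x ⟨_, hxσ⟩ ⟨_, hxτ⟩
    have hσa : StrictAnti (x ∘ σ) := fun i j hij => hxσ i j hij
    have hτa : StrictAnti (x ∘ τ) := fun i j hij => hxτ i j hij
    have hinj : Function.Injective x := by
      have h1 : Function.Injective (x ∘ σ) := hσa.injective
      have hxe : x = (x ∘ σ) ∘ (σ.symm : Fin m ≃ Fin m) := by
        funext i; simp
      rw [hxe]
      exact h1.comp σ.symm.injective
    have hrange : Set.range (x ∘ σ) = Set.range (x ∘ τ) := by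
      rw [Set.range_comp, Set.range_comp, Set.range_eq_univ.mpr σ.surjective,
        Set.range_eq_univ.mpr τ.surjective]
    have : x ∘ σ = x ∘ τ := (hσa.range_inj hτa).mp hrange
    exact hst (Equiv.ext fun i => hinj (congrFun this i))
  -- ties are null
  have htie : ∀ i j : Fin m, i ≠ j → ν {x : Fin m → ℝ | x i = x j} = 0 := by
    intro i j hij
    have hset : MeasurableSet {x : Fin m → ℝ | x i = x j} :=
      measurableSet_eq_fun (measurable_pi_apply i) (measurable_pi_apply j)
    rw [hν, ← hjl, Measure.map_apply hY hset]
    exact tie_null hmeas hindep hlaw hcont (fun h => hij (Fin.val_injective h))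
  have hnoninj : ν {x : Fin m → ℝ | ¬ Function.Injective x} = 0 := by
    have hsub : {x : Fin m → ℝ | ¬ Function.Injective x}
        ⊆ ⋃ (i : Fin m) (j : Fin m) (_ : i ≠ j), {x : Fin m → ℝ | x i = x j} := by
      intro x hx
      simp only [Set.mem_setOf_eq, Function.Injective, not_forall] at hx
      obtain ⟨a, b, hab, hne⟩ := hx
      exact Set.mem_iUnion.mpr ⟨a, Set.mem_iUnion.mpr ⟨b, Set.mem_iUnion.mpr ⟨hne, hab⟩⟩⟩
    refine measure_mono_null hsub ?_
    refine measure_iUnion_null fun i => measure_iUnion_null fun j =>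
      measure_iUnion_null fun hij => htie i j hij
  -- the union of the S σ together with ties covers the box
  have hbox : ν (Set.pi Set.univ fun _ : Fin m => Set.Iic t) = μ (Set.Iic t) ^ m := by
    rw [hν, Measure.pi_pi, Finset.prod_const, Finset.card_univ, Fintype.card_fin]
  have hcover : (Set.pi Set.univ fun _ : Fin m => Set.Iic t)
      ⊆ (⋃ σ : Equiv.Perm (Fin m), S σ) ∪ {x : Fin m → ℝ | ¬ Function.Injective x} := by
    intro x hx
    by_cases hinj : Function.Injective x
    · left
      set τ := Tuple.sort x with hτ
      have hmono : Monotone (x ∘ τ) := Tuple.monotone_sort x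
      have hsm : StrictMono (x ∘ τ) :=
        hmono.strictMono_of_injective (hinj.comp τ.injective)
      refine Set.mem_iUnion.mpr ⟨(Fin.revPerm : Equiv.Perm (Fin m)).trans τ, ?_, ?_⟩
      · intro i; exact hx i (Set.mem_univ i)
      · intro i j hij
        have : (⟨j, by omega⟩ : Fin m).rev < (⟨i, by omega⟩ : Fin m).rev := by
          exact Fin.rev_lt_rev.mpr hij
        simpa using hsm (Fin.rev_lt_rev.mpr hij)
    · right; exact hinj
  have hsubbox : (⋃ σ : Equiv.Perm (Fin m), S σ)
      ⊆ Set.pi Set.univ fun _ : Fin m => Set.Iic t := by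
    rintro x hx
    obtain ⟨σ, hσ⟩ := Set.mem_iUnion.mp hx
    intro i _
    exact hσ.1 i
  have hsum : ν (⋃ σ : Equiv.Perm (Fin m), S σ) = ∑ σ : Equiv.Perm (Fin m), ν (S σ) := by
    rw [measure_iUnion hdisj hSmeas, tsum_fintype]
  have hkey : (Nat.factorial m : ENNReal) * ν (S 1) = μ (Set.Iic t) ^ m := by
    have h1 : ν (Set.pi Set.univ fun _ : Fin m => Set.Iic t)
        = ∑ σ : Equiv.Perm (Fin m), ν (S σ) := by
      refine le_antisymm ?_ ?_
      · calc ν (Set.pi Set.univ fun _ : Fin m => Set.Iic t)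
            ≤ ν ((⋃ σ : Equiv.Perm (Fin m), S σ) ∪ {x : Fin m → ℝ | ¬ Function.Injective x}) :=
              measure_mono hcover
          _ ≤ ν (⋃ σ : Equiv.Perm (Fin m), S σ) + ν {x : Fin m → ℝ | ¬ Function.Injective x} :=
              measure_union_le _ _
          _ = ∑ σ : Equiv.Perm (Fin m), ν (S σ) := by rw [hnoninj, add_zero, hsum]
      · rw [← hsum]; exact measure_mono hsubbox
    rw [← hbox, h1]
    have : ∑ σ : Equiv.Perm (Fin m), ν (S σ) = ∑ _σ : Equiv.Perm (Fin m), ν (S 1) :=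
      Finset.sum_congr rfl fun σ _ => hS_eq σ
    rw [this, Finset.sum_const, Finset.card_univ, Fintype.card_perm, Fintype.card_fin,
      nsmul_eq_mul]
  -- identify the event with the preimage of S 1
  have hevent : {ω | ξ 0 ω ≤ t ∧ ∀ i < n, ξ (i + 1) ω < ξ i ω}
      = (fun ω (i : Fin m) => ξ (i : ℕ) ω) ⁻¹' S 1 := by
    ext ω
    simp only [Set.mem_preimage, hS, Set.mem_setOf_eq, Equiv.Perm.coe_one, id_eq]
    constructor
    · rintro ⟨h0, hchain⟩
      have hfin : ∀ i j : Fin m, i < j → ξ (j : ℕ) ω < ξ (i : ℕ) ω := by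
        intro i j hij
        have hval : (i : ℕ) < (j : ℕ) := hij
        have hj : (j : ℕ) ≤ n := by have := j.isLt; omega
        exact nat_chain (f := fun a => ξ a ω) hchain (i : ℕ) (j : ℕ) hval hj
      refine ⟨fun i => ?_, hfin⟩
      rcases eq_or_ne i 0 with rfl | hne
      · simpa using h0
      · have h0lt : (0 : Fin m) < i := Fin.pos_of_ne_zero hne
        have := hfin 0 i h0lt
        simp only [Fin.val_zero] at this
        exact (this.trans_le h0).le
    · rintro ⟨hle, hchain⟩
      refine ⟨by simpa using hle 0, fun i hi => ?_⟩
      have h1 : (⟨i, by omega⟩ : Fin m) < ⟨i + 1, by omega⟩ := by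
        simp [Fin.lt_def]
      simpa using hchain ⟨i, by omega⟩ ⟨i + 1, by omega⟩ h1
  rw [hevent, ← Measure.map_apply hY (hSmeas 1), hjl, ← hν]
  rw [ENNReal.eq_div_iff (by exact_mod_cast (Nat.factorial_pos m).ne')
    (ENNReal.natCast_ne_top _), hkey]

private lemma series_lemma {c : ℝ} (h0 : 0 ≤ c) (h1 : c ≤ 1) :
    (∑' k : ℕ, ENNReal.ofReal (c ^ (2 * k + 1) / (Nat.factorial (2 * k + 1) : ℝ)
        - c ^ (2 * k + 2) / (Nat.factorial (2 * k + 2) : ℝ)))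
      = ENNReal.ofReal (1 - Real.exp (-c)) := by
  set v : ℕ → ℝ := fun n => (-1) ^ n * (c ^ (n + 1) / (Nat.factorial (n + 1) : ℝ)) with hvdef
  have hexp : HasSum (fun n : ℕ => (-c) ^ n / (Nat.factorial n : ℝ)) (Real.exp (-c)) := by
    rw [Real.exp_eq_exp_ℝ]
    exact NormedSpace.expSeries_div_hasSum_exp (-c)
  have h2 : HasSum (fun n : ℕ => (-c) ^ (n + 1) / (Nat.factorial (n + 1) : ℝ))
      (Real.exp (-c) - 1) := by
    refine (hasSum_nat_add_iff (f := fun n : ℕ => (-c) ^ n / (Nat.factorial n : ℝ)) 1).mpr ?_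
    simpa using hexp
  have hv : HasSum v (1 - Real.exp (-c)) := by
    have h3 := h2.neg
    rw [neg_sub] at h3
    convert h3 using 2 with n
    · rfl
    rw [hvdef]
    simp only
    rw [neg_pow, pow_succ]
    ring
  have hvs := hv.summable
  have heven : HasSum (fun k => v (2 * k)) (∑' k, v (2 * k)) :=
    (hvs.comp_injective (fun a b h => by omega)).hasSum
  have hodd : HasSum (fun k => v (2 * k + 1)) (∑' k, v (2 * k + 1)) :=
    (hvs.comp_injective (fun a b h => by omega)).hasSum
  have hsumeq : (∑' k, v (2 * k)) + (∑' k, v (2 * k + 1)) = 1 - Real.exp (-c) :=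
    (heven.even_add_odd hodd).unique hv
  have hw : HasSum (fun k => v (2 * k) + v (2 * k + 1)) (1 - Real.exp (-c)) := by
    rw [← hsumeq]
    exact heven.add hodd
  have hweq : ∀ k : ℕ, v (2 * k) + v (2 * k + 1)
      = c ^ (2 * k + 1) / (Nat.factorial (2 * k + 1) : ℝ)
        - c ^ (2 * k + 2) / (Nat.factorial (2 * k + 2) : ℝ) := by
    intro k
    have e1 : ((-1 : ℝ)) ^ (2 * k) = 1 := by rw [pow_mul]; norm_num
    have e2 : ((-1 : ℝ)) ^ (2 * k + 1) = -1 := by rw [pow_succ, e1]; norm_num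
    show (-1 : ℝ) ^ (2 * k) * (c ^ (2 * k + 1) / (Nat.factorial (2 * k + 1) : ℝ))
        + (-1 : ℝ) ^ (2 * k + 1) * (c ^ (2 * k + 2) / (Nat.factorial (2 * k + 2) : ℝ)) = _
    rw [e1, e2]
    ring
  have hw' : HasSum (fun k => c ^ (2 * k + 1) / (Nat.factorial (2 * k + 1) : ℝ)
      - c ^ (2 * k + 2) / (Nat.factorial (2 * k + 2) : ℝ)) (1 - Real.exp (-c)) := by
    rw [← funext hweq]
    exact hw
  have hnonneg : ∀ k : ℕ, 0 ≤ c ^ (2 * k + 1) / (Nat.factorial (2 * k + 1) : ℝ)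
      - c ^ (2 * k + 2) / (Nat.factorial (2 * k + 2) : ℝ) := by
    intro k
    rw [sub_nonneg]
    refine div_le_div₀ (pow_nonneg h0 _) (pow_le_pow_of_le_one h0 h1 (by omega)) ?_ ?_
    · exact_mod_cast Nat.factorial_pos _
    · exact_mod_cast Nat.factorial_le (by omega)
  rw [← ENNReal.ofReal_tsum_of_nonneg hnonneg hw'.summable, hw'.tsum_eq]

end Aux

/-- `P(ξ₀ ≤ t and odd descent at 0) = 1 - exp (-F t)` for an i.i.d. sequence with
continuous distribution function `F`. An odd descent at 0 of length `2k+1` is the event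
`ξ₀ > ξ₁ > ⋯ > ξ_{2k} < ξ_{2k+1}` (for `k = 0` this is just `ξ₀ < ξ₁`). -/
theorem prob_odd_descent_le (Ω : Type*) [MeasurableSpace Ω] (P : Measure Ω)
    [IsProbabilityMeasure P] (ξ : ℕ → Ω → ℝ) (μ : Measure ℝ) (F : ℝ → ℝ)
    (hmeas : ∀ i, Measurable (ξ i))
    (hindep : iIndepFun ξ P)
    (hlaw : ∀ i, Measure.map (ξ i) P = μ)
    (hcont : ∀ x : ℝ, μ {x} = 0)
    (hF : ∀ x, F x = (μ (Set.Iic x)).toReal) (t : ℝ) :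
    P {ω | ξ 0 ω ≤ t ∧ ∃ k : ℕ,
        (∀ i : ℕ, i < 2 * k → ξ (i + 1) ω < ξ i ω) ∧ ξ (2 * k) ω < ξ (2 * k + 1) ω} =
      ENNReal.ofReal (1 - Real.exp (-F t)) := by
  have hμ : IsProbabilityMeasure μ := by
    rw [← hlaw 0]
    exact Measure.isProbabilityMeasure_map (hmeas 0).aemeasurable
  set G := μ (Set.Iic t) with hG
  set c := F t with hcdef
  have hc : c = G.toReal := hF t
  have hG1 : G ≤ 1 := prob_le_one
  have hGtop : G ≠ ⊤ := (hG1.trans_lt ENNReal.one_lt_top).ne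
  have hofc : ENNReal.ofReal c = G := by rw [hc]; exact ENNReal.ofReal_toReal hGtop
  have hc0 : 0 ≤ c := hc ▸ ENNReal.toReal_nonneg
  have hc1 : c ≤ 1 := by
    rw [hc]
    calc G.toReal ≤ (1 : ENNReal).toReal := ENNReal.toReal_mono ENNReal.one_ne_top hG1
      _ = 1 := by simp
  set D : ℕ → Set Ω := fun n => {ω | ξ 0 ω ≤ t ∧ ∀ i < n, ξ (i + 1) ω < ξ i ω} with hDdef
  set q : ℕ → ENNReal := fun n => G ^ (n + 1) / (Nat.factorial (n + 1) : ENNReal) with hqdef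
  have hD : ∀ n, P (D n) = q n := fun n => desc_prob hmeas hindep hlaw hcont t n
  have hDmeas : ∀ n, MeasurableSet (D n) := by
    intro n
    have : D n = {ω | ξ 0 ω ≤ t} ∩ ⋂ i, ⋂ (_ : i < n), {ω | ξ (i + 1) ω < ξ i ω} := by
      ext ω; simp [hDdef, Set.mem_iInter]
    rw [this]
    exact (measurableSet_le (hmeas 0) measurable_const).inter
      (MeasurableSet.iInter fun i => MeasurableSet.iInter fun _ =>
        measurableSet_lt (hmeas _) (hmeas _))
  set E : ℕ → Set Ω := fun k => D (2 * k) ∩ {ω | ξ (2 * k) ω < ξ (2 * k + 1) ω} with hEdef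
  have hEmeas : ∀ k, MeasurableSet (E k) :=
    fun k => (hDmeas _).inter (measurableSet_lt (hmeas _) (hmeas _))
  have hqfin : ∀ n, q n ≠ ⊤ := by
    intro n
    rw [hqdef]
    simp only [Ne, ENNReal.div_eq_top, not_or, not_and_or]
    constructor
    · right; simpa using (Nat.factorial_pos (n + 1)).ne'
    · left; exact ENNReal.pow_ne_top hGtop
  -- split P(D (2k)) = P(E k) + P(D (2k+1))
  have hsplit : ∀ k, P (D (2 * k)) = P (E k) + P (D (2 * k + 1)) := by
    intro k
    have hDsucc : D (2 * k + 1) = D (2 * k) ∩ {ω | ξ (2 * k + 1) ω < ξ (2 * k) ω} := by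
      ext ω
      simp only [hDdef, Set.mem_setOf_eq, Set.mem_inter_iff]
      constructor
      · rintro ⟨h0, hch⟩
        exact ⟨⟨h0, fun i hi => hch i (by omega)⟩, hch (2 * k) (by omega)⟩
      · rintro ⟨⟨h0, hch⟩, hlast⟩
        refine ⟨h0, fun i hi => ?_⟩
        rcases Nat.lt_or_ge i (2 * k) with h' | h'
        · exact hch i h'
        · have : i = 2 * k := by omega
          subst this
          exact hlast
    have hdisjED : Disjoint (E k) (D (2 * k + 1)) := by
      rw [Set.disjoint_left]
      rintro ω ⟨_, h1⟩ h2
      rw [hDsucc] at h2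
      have h22 : ξ (2 * k + 1) ω < ξ (2 * k) ω := h2.2
      exact lt_asymm h1 h22
    have hsub1 : E k ∪ D (2 * k + 1) ⊆ D (2 * k) := by
      rintro ω (hω | hω)
      · exact hω.1
      · rw [hDsucc] at hω; exact hω.1
    have hsub2 : D (2 * k) ⊆ (E k ∪ D (2 * k + 1))
        ∪ {ω | ξ (2 * k) ω = ξ (2 * k + 1) ω} := by
      intro ω hω
      rcases lt_trichotomy (ξ (2 * k) ω) (ξ (2 * k + 1) ω) with h | h | h
      · exact Or.inl (Or.inl ⟨hω, h⟩)
      · exact Or.inr h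
      · refine Or.inl (Or.inr ?_)
        rw [hDsucc]
        exact ⟨hω, h⟩
    have htie : P {ω | ξ (2 * k) ω = ξ (2 * k + 1) ω} = 0 :=
      tie_null hmeas hindep hlaw hcont (by omega)
    have h1 : P (D (2 * k)) = P (E k ∪ D (2 * k + 1)) := by
      refine le_antisymm ?_ (measure_mono hsub1)
      calc P (D (2 * k)) ≤ P ((E k ∪ D (2 * k + 1)) ∪ {ω | ξ (2 * k) ω = ξ (2 * k + 1) ω}) :=
            measure_mono hsub2
        _ ≤ P (E k ∪ D (2 * k + 1)) + P {ω | ξ (2 * k) ω = ξ (2 * k + 1) ω} :=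
            measure_union_le _ _
        _ = P (E k ∪ D (2 * k + 1)) := by rw [htie, add_zero]
    rw [h1, measure_union hdisjED (hDmeas _)]
  have hPE : ∀ k, P (E k) = q (2 * k) - q (2 * k + 1) := by
    intro k
    refine ENNReal.eq_sub_of_add_eq (hqfin _) ?_
    rw [← hD, ← hD, ← hsplit]
  -- q in terms of ofReal
  have hq : ∀ n, q n = ENNReal.ofReal (c ^ (n + 1) / (Nat.factorial (n + 1) : ℝ)) := by
    intro n
    rw [ENNReal.ofReal_div_of_pos (by exact_mod_cast Nat.factorial_pos (n + 1)),
      ENNReal.ofReal_pow hc0, hofc, ENNReal.ofReal_natCast, hqdef]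
  have hnonneg : ∀ k : ℕ, 0 ≤ c ^ (2 * k + 2) / (Nat.factorial (2 * k + 2) : ℝ) :=
    fun k => div_nonneg (pow_nonneg hc0 _) (by positivity)
  have hPE' : ∀ k, P (E k) = ENNReal.ofReal (c ^ (2 * k + 1) / (Nat.factorial (2 * k + 1) : ℝ)
      - c ^ (2 * k + 2) / (Nat.factorial (2 * k + 2) : ℝ)) := by
    intro k
    rw [hPE k, hq, hq, ENNReal.ofReal_sub _ (hnonneg k)]
  -- the event is the disjoint union of the E k
  have hevent : {ω | ξ 0 ω ≤ t ∧ ∃ k : ℕ,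
      (∀ i : ℕ, i < 2 * k → ξ (i + 1) ω < ξ i ω) ∧ ξ (2 * k) ω < ξ (2 * k + 1) ω}
      = ⋃ k, E k := by
    ext ω
    simp only [Set.mem_setOf_eq, Set.mem_iUnion, hEdef, hDdef, Set.mem_inter_iff]
    constructor
    · rintro ⟨h0, k, hch, hasc⟩
      exact ⟨k, ⟨h0, hch⟩, hasc⟩
    · rintro ⟨k, ⟨⟨h0, hch⟩, hasc⟩⟩
      exact ⟨h0, k, hch, hasc⟩
  have hpair : Pairwise (Function.onFun Disjoint E) := by
    have haux : ∀ k l, k < l → Disjoint (E k) (E l) := by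
      intro k l hkl
      rw [Set.disjoint_left]
      rintro ω ⟨_, hasc⟩ ⟨⟨_, hch⟩, _⟩
      exact absurd (hch (2 * k) (by omega)) (lt_asymm hasc)
    intro k l hne
    rcases hne.lt_or_gt with h | h
    · exact haux k l h
    · exact (haux l k h).symm
  rw [hevent, measure_iUnion hpair hEmeas]
  calc (∑' k, P (E k))
      = ∑' k, ENNReal.ofReal (c ^ (2 * k + 1) / (Nat.factorial (2 * k + 1) : ℝ)
        - c ^ (2 * k + 2) / (Nat.factorial (2 * k + 2) : ℝ)) := by
        exact tsum_congr hPE'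
    _ = ENNReal.ofReal (1 - Real.exp (-c)) := series_lemma hc0 hc1
end

section
/- For i.i.d. (ξ_j)_{j≥1} with continuous distribution, the events 'descent of even length at i' for different lengths 2ℓ are pairwise disjoint, and P(even descent at i) = ∑_{ℓ≥1} P(ξ_i > ξ_{i+1} > ⋯ > ξ_{i+2ℓ−1} < ξ_{i+2ℓ}) = ∑_{ℓ≥1} 2ℓ/(2ℓ+1)! = e^{−1}. -/
open MeasureTheory ProbabilityTheory
open scoped Nat ENNReal

section Aux

variable {μ : Measure ℝ} [IsProbabilityMeasure μ]

/-- adjacent decreasing implies fully decreasing -/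
lemma EDaux_adj_anti {n : ℕ} {x : Fin n → ℝ}
    (h : ∀ j : ℕ, (hj : j + 1 < n) → x ⟨j + 1, hj⟩ < x ⟨j, Nat.lt_of_succ_lt hj⟩) :
    ∀ a b : Fin n, a < b → x b < x a := by
  have key : ∀ d a : ℕ, (hd : a + (d + 1) < n) → x ⟨a + (d + 1), hd⟩ < x ⟨a, by omega⟩ := by
    intro d
    induction d with
    | zero => intro a hd; exact h a hd
    | succ d ih =>
        intro a hd
        have h1 : x ⟨a + (d + 1) + 1, hd⟩ < x ⟨a + (d + 1), by omega⟩ := h (a + (d + 1)) hd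
        exact lt_trans h1 (ih a (by omega))
  intro a b hab
  obtain ⟨d, hd⟩ : ∃ d, (b : ℕ) = (a : ℕ) + (d + 1) := ⟨(b : ℕ) - a - 1, by
    have := a.isLt; have := b.isLt; have : (a : ℕ) < b := hab; omega⟩
  have hb : b = ⟨(a : ℕ) + (d + 1), by omega⟩ := Fin.ext hd
  have := key d a (by rw [← hd]; exact b.isLt)
  rw [hb]
  simpa using this

/-- the set of strictly decreasing tuples -/
def EDaux_decSet (n : ℕ) : Set (Fin n → ℝ) := {x | ∀ a b : Fin n, a < b → x b < x a}

lemma EDaux_measurableSet_decSet (n : ℕ) : MeasurableSet (EDaux_decSet n) := by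
  have : EDaux_decSet n
      = ⋂ (a : Fin n) (b : Fin n) (_ : a < b), {x : Fin n → ℝ | x b < x a} := by
    ext x; simp [EDaux_decSet]
  rw [this]
  exact MeasurableSet.iInter fun a => MeasurableSet.iInter fun b => MeasurableSet.iInter fun _ =>
    measurableSet_lt (measurable_pi_apply b) (measurable_pi_apply a)

lemma EDaux_pi_comp_perm (n : ℕ) (σ : Equiv.Perm (Fin n)) {S : Set (Fin n → ℝ)}
    (hS : MeasurableSet S) :
    (Measure.pi fun _ : Fin n => μ) {x | x ∘ σ ∈ S} = (Measure.pi fun _ : Fin n => μ) S := by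
  have hmp := measurePreserving_piCongrLeft (fun _ : Fin n => μ) σ.symm
  have he : ∀ x : Fin n → ℝ,
      (MeasurableEquiv.piCongrLeft (fun _ : Fin n => ℝ) σ.symm) x = x ∘ σ := by
    intro x; funext j
    have h1 := Equiv.piCongrLeft_apply_apply (fun _ : Fin n => ℝ) σ.symm x (σ j)
    rw [MeasurableEquiv.coe_piCongrLeft]
    have h2 : σ.symm (σ j) = j := σ.symm_apply_apply j
    calc (Equiv.piCongrLeft (fun _ : Fin n => ℝ) σ.symm) x j
        = (Equiv.piCongrLeft (fun _ : Fin n => ℝ) σ.symm) x (σ.symm (σ j)) := by rw [h2]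
    _ = x (σ j) := h1
    _ = (x ∘ σ) j := rfl
  have hpre : {x : Fin n → ℝ | x ∘ σ ∈ S}
      = (MeasurableEquiv.piCongrLeft (fun _ : Fin n => ℝ) σ.symm) ⁻¹' S := by
    ext x; simp [he x]
  rw [hpre]
  exact hmp.measure_preimage hS.nullMeasurableSet

lemma EDaux_pi_map_pair (n : ℕ) (a b : Fin n) (hab : a ≠ b) :
    Measure.map (fun x : Fin n → ℝ => (x a, x b)) (Measure.pi fun _ : Fin n => μ)
      = μ.prod μ := by
  classical
  refine (Measure.prod_eq fun s t hs ht => ?_).symm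
  rw [Measure.map_apply (by fun_prop) (hs.prod ht)]
  set f : Fin n → Set ℝ := fun k => if k = a then s else if k = b then t else Set.univ with hf
  have hset : (fun x : Fin n → ℝ => (x a, x b)) ⁻¹' (s ×ˢ t) = Set.pi Set.univ f := by
    ext x
    simp only [Set.mem_preimage, Set.mem_prod, Set.mem_pi, Set.mem_univ, forall_true_left, hf]
    constructor
    · rintro ⟨h1, h2⟩ k
      split_ifs with h h'
      · rwa [h]
      · rwa [h']
      · trivial
    · intro h
      constructor
      · have := h a; simpa using this
      · have := h b; simp only [if_neg (Ne.symm hab)] at this; simpa using this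
  rw [hset, Measure.pi_pi]
  have hprod : (∏ k : Fin n, μ (f k)) = (∏ k ∈ ({a, b} : Finset (Fin n)), μ (f k))
      * ∏ k ∈ ({a, b} : Finset (Fin n))ᶜ, μ (f k) :=
    (Finset.prod_mul_prod_compl _ _).symm
  rw [hprod, Finset.prod_pair hab]
  have hfa : f a = s := by simp [hf]
  have hfb : f b = t := by simp [hf, Ne.symm hab]
  have hcompl : (∏ k ∈ ({a, b} : Finset (Fin n))ᶜ, μ (f k)) = 1 := by
    apply Finset.prod_eq_one
    intro k hk
    simp only [Finset.mem_compl, Finset.mem_insert, Finset.mem_singleton, not_or] at hk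
    simp [hf, hk.1, hk.2]
  rw [hfa, hfb, hcompl, mul_one]

lemma EDaux_measurableSet_diag :
    MeasurableSet {p : ℝ × ℝ | p.1 = p.2} := by
  have : {p : ℝ × ℝ | p.1 = p.2} = (fun p : ℝ × ℝ => p.1 - p.2) ⁻¹' {0} := by
    ext p; simp [sub_eq_zero]
  rw [this]
  exact (measurable_fst.sub measurable_snd) (measurableSet_singleton 0)

lemma EDaux_prod_diag_zero (hcont : ∀ x : ℝ, μ {x} = 0) :
    (μ.prod μ) {p : ℝ × ℝ | p.1 = p.2} = 0 := by
  rw [Measure.prod_apply EDaux_measurableSet_diag]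
  have h1 : ∀ x : ℝ, (Prod.mk x ⁻¹' {p : ℝ × ℝ | p.1 = p.2}) = {x} := by
    intro x; ext y; simp [eq_comm]
  simp [h1, hcont]

lemma EDaux_pi_coord_eq_zero (hcont : ∀ x : ℝ, μ {x} = 0) (n : ℕ) (a b : Fin n)
    (hab : a ≠ b) :
    (Measure.pi fun _ : Fin n => μ) {x | x a = x b} = 0 := by
  have h1 : {x : Fin n → ℝ | x a = x b}
      = (fun x : Fin n → ℝ => (x a, x b)) ⁻¹' {p : ℝ × ℝ | p.1 = p.2} := rfl
  rw [h1, ← Measure.map_apply (by fun_prop) EDaux_measurableSet_diag,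
    EDaux_pi_map_pair n a b hab, EDaux_prod_diag_zero hcont]

lemma EDaux_pi_noninj_zero (hcont : ∀ x : ℝ, μ {x} = 0) (n : ℕ) :
    (Measure.pi fun _ : Fin n => μ) {x : Fin n → ℝ | ¬ Function.Injective x} = 0 := by
  have hsub : {x : Fin n → ℝ | ¬ Function.Injective x}
      ⊆ ⋃ (a : Fin n) (b : Fin n) (_ : a ≠ b), {x : Fin n → ℝ | x a = x b} := by
    intro x hx
    simp only [Set.mem_setOf_eq, Function.Injective, not_forall] at hx
    obtain ⟨a, b, hxab, hne⟩ := hx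
    exact Set.mem_iUnion.2 ⟨a, Set.mem_iUnion.2 ⟨b, Set.mem_iUnion.2 ⟨hne, hxab⟩⟩⟩
  refine measure_mono_null hsub ?_
  exact measure_iUnion_null fun a => measure_iUnion_null fun b =>
    measure_iUnion_null fun hne => EDaux_pi_coord_eq_zero hcont n a b hne

lemma EDaux_pi_decSet (hcont : ∀ x : ℝ, μ {x} = 0) (n : ℕ) :
    (Measure.pi fun _ : Fin n => μ) (EDaux_decSet n) = 1 / (n ! : ℝ≥0∞) := by
  classical
  set π := (Measure.pi fun _ : Fin n => μ) with hπ
  haveI : IsProbabilityMeasure π := by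
    constructor
    rw [hπ, ← Set.pi_univ Set.univ, Measure.pi_pi]
    simp
  set C : Equiv.Perm (Fin n) → Set (Fin n → ℝ) :=
    fun σ => {x | ∀ a b : Fin n, a < b → x (σ b) < x (σ a)} with hC
  have hCpre : ∀ σ, C σ = {x | x ∘ σ ∈ EDaux_decSet n} := by
    intro σ; rfl
  have hCval : ∀ σ, π (C σ) = π (EDaux_decSet n) := by
    intro σ
    rw [hCpre σ, hπ, EDaux_pi_comp_perm n σ (EDaux_measurableSet_decSet n)]
  have hCmeas : ∀ σ, MeasurableSet (C σ) := by
    intro σ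
    rw [hCpre σ]
    have : {x : Fin n → ℝ | x ∘ σ ∈ EDaux_decSet n}
        = (fun x : Fin n → ℝ => x ∘ σ) ⁻¹' EDaux_decSet n := rfl
    rw [this]
    exact (EDaux_measurableSet_decSet n).preimage (by fun_prop)
  have hdisj : Pairwise (Function.onFun Disjoint C) := by
    intro σ τ hne
    rw [Function.onFun, Set.disjoint_left]
    rintro x hxσ hxτ
    apply hne
    have hanti : StrictAnti (x ∘ σ) := fun a b hab => hxσ a b hab
    have hmono : StrictMono (fun k => σ.symm (τ k)) := by
      intro a b hab
      have h1 : (x ∘ σ) (σ.symm (τ b)) < (x ∘ σ) (σ.symm (τ a)) := by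
        simp only [Function.comp_apply, Equiv.apply_symm_apply]
        exact hxτ a b hab
      exact hanti.lt_iff_gt.mp h1
    have hid : (fun k => σ.symm (τ k)) = id := by
      haveI : WellFoundedLT (Fin n) := inferInstance
      refine (hmono.range_inj (strictMono_id : StrictMono (id : Fin n → Fin n))).mp ?_
      rw [Set.range_id]
      exact Set.range_eq_univ.mpr (σ.symm.surjective.comp τ.surjective)
    refine Equiv.ext fun k => ?_
    have hk := congrFun hid k
    simp only [id] at hk
    calc σ k = σ (σ.symm (τ k)) := by rw [hk]
    _ = τ k := σ.apply_symm_apply _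
  have hcover : Set.univ ⊆ {x : Fin n → ℝ | ¬ Function.Injective x} ∪ ⋃ σ, C σ := by
    intro x _
    by_cases hx : Function.Injective x
    · right
      set σ := Tuple.sort (fun k => -x k) with hσ
      refine Set.mem_iUnion.2 ⟨σ, ?_⟩
      intro a b hab
      have hmono : Monotone ((fun k => -x k) ∘ σ) := Tuple.monotone_sort _
      have hinj : Function.Injective ((fun k => -x k) ∘ σ) := by
        have : Function.Injective (fun k => -x k) := fun u v huv => hx (by
          simpa using congrArg Neg.neg huv)
        exact this.comp σ.injective
      have hsm := hmono.strictMono_of_injective hinj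
      have := hsm hab
      simp only [Function.comp_apply, neg_lt_neg_iff] at this
      exact this
    · left; exact hx
  have hunion_meas : π (⋃ σ, C σ) = ∑' σ : Equiv.Perm (Fin n), π (C σ) :=
    measure_iUnion hdisj hCmeas
  have hunion_one : π (⋃ σ, C σ) = 1 := by
    apply le_antisymm (prob_le_one)
    calc (1 : ℝ≥0∞) = π Set.univ := measure_univ.symm
    _ ≤ π ({x : Fin n → ℝ | ¬ Function.Injective x} ∪ ⋃ σ, C σ) := measure_mono hcover
    _ ≤ π {x : Fin n → ℝ | ¬ Function.Injective x} + π (⋃ σ, C σ) := measure_union_le _ _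
    _ = π (⋃ σ, C σ) := by rw [hπ, EDaux_pi_noninj_zero hcont n, zero_add]
  have hsum : (n ! : ℝ≥0∞) * π (EDaux_decSet n) = 1 := by
    rw [← hunion_one, hunion_meas, tsum_fintype]
    simp only [hCval]
    rw [Finset.sum_const, Finset.card_univ, Fintype.card_perm, Fintype.card_fin, nsmul_eq_mul]
  have hne : (n ! : ℝ≥0∞) ≠ 0 := Nat.cast_ne_zero.2 (Nat.factorial_ne_zero n)
  have hnt : (n ! : ℝ≥0∞) ≠ ⊤ := ENNReal.natCast_ne_top _
  calc π (EDaux_decSet n) = (n ! : ℝ≥0∞)⁻¹ * ((n ! : ℝ≥0∞) * π (EDaux_decSet n)) := by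
        rw [← mul_assoc, ENNReal.inv_mul_cancel hne hnt, one_mul]
  _ = 1 / (n ! : ℝ≥0∞) := by rw [hsum, mul_one, one_div]

lemma EDaux_joint_law {Ω : Type*} [MeasurableSpace Ω] (P : Measure Ω)
    [IsProbabilityMeasure P] (ξ : ℕ → Ω → ℝ)
    (hmeas : ∀ j, Measurable (ξ j))
    (hindep : iIndepFun ξ P)
    (hlaw : ∀ j, Measure.map (ξ j) P = μ) (i n : ℕ) :
    Measure.map (fun ω (k : Fin n) => ξ (i + k) ω) P = Measure.pi fun _ : Fin n => μ := by
  classical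
  refine (Measure.pi_eq fun s hs => ?_).symm
  have hT : Measurable (fun ω (k : Fin n) => ξ (i + k) ω) :=
    measurable_pi_lambda _ fun k => hmeas _
  rw [Measure.map_apply hT (MeasurableSet.univ_pi hs)]
  have hpre : (fun ω (k : Fin n) => ξ (i + k) ω) ⁻¹' (Set.pi Set.univ s)
      = ⋂ k : Fin n, ξ (i + k) ⁻¹' s k := by
    ext ω; simp [Set.mem_pi]
  rw [hpre]
  set sets : ℕ → Set ℝ :=
    fun j => if h : j - i < n ∧ i ≤ j then s ⟨j - i, h.1⟩ else Set.univ with hsets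
  set S : Finset ℕ := Finset.image (fun k : Fin n => i + (k : ℕ)) Finset.univ with hS
  have hsk : ∀ k : Fin n, sets (i + (k : ℕ)) = s k := by
    intro k
    have hk := k.isLt
    have hcond : (i + (k : ℕ)) - i < n ∧ i ≤ i + (k : ℕ) := ⟨by omega, by omega⟩
    rw [hsets]
    simp only [dif_pos hcond]
    exact congrArg s (Fin.ext (show i + (k : ℕ) - i = (k : ℕ) by omega))
  have hsets_meas : ∀ j ∈ S, MeasurableSet (sets j) := by
    intro j _
    rw [hsets]
    by_cases h : j - i < n ∧ i ≤ j
    · simp only [dif_pos h]; exact hs _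
    · simp only [dif_neg h]; exact MeasurableSet.univ
  have hkey := (iIndepFun_iff_measure_inter_preimage_eq_mul.mp hindep) S hsets_meas
  have hset_eq : (⋂ j ∈ S, ξ j ⁻¹' sets j) = ⋂ k : Fin n, ξ (i + k) ⁻¹' s k := by
    ext ω
    simp only [Set.mem_iInter, hS, Finset.mem_image, Finset.mem_univ, true_and,
      Set.mem_preimage]
    constructor
    · intro h k
      have := h (i + (k : ℕ)) ⟨k, rfl⟩
      rwa [hsk k] at this
    · rintro h j ⟨k, rfl⟩
      rw [hsk k]
      exact h k
  rw [hset_eq] at hkey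
  rw [hkey, hS, Finset.prod_image (fun a _ b _ hab => by
    have : (a : ℕ) = b := by omega
    exact Fin.ext this)]
  refine Finset.prod_congr rfl fun k _ => ?_
  rw [hsk k, ← hlaw (i + (k : ℕ)), Measure.map_apply (hmeas _) (hs k)]

lemma EDaux_real_sum :
    Summable (fun k : ℕ => (2 * (k + 1) : ℝ) / ((2 * (k + 1) + 1)! : ℝ)) ∧
    (∑' k : ℕ, (2 * (k + 1) : ℝ) / ((2 * (k + 1) + 1)! : ℝ)) = Real.exp (-1) := by
  set f : ℕ → ℝ := fun n => (-1) ^ n / n ! with hfdef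
  set g : ℕ → ℝ := fun m => (2 * m : ℝ) / (2 * m + 1)! with hgdef
  have hf : Summable f := Real.summable_pow_div_factorial (-1)
  have he : Summable fun k => f (2 * k) := hf.comp_injective (fun a b h => by omega)
  have ho : Summable fun k => f (2 * k + 1) := hf.comp_injective (fun a b h => by omega)
  have hfac_pos : ∀ m : ℕ, (0 : ℝ) < (m ! : ℝ) := fun m => by
    exact_mod_cast Nat.factorial_pos m
  have hg_eq : ∀ k : ℕ, g k = f (2 * k) + f (2 * k + 1) := by
    intro k
    have h1 : ((-1 : ℝ)) ^ (2 * k) = 1 := by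
      rw [pow_mul]; norm_num
    have h2 : ((-1 : ℝ)) ^ (2 * k + 1) = -1 := by
      rw [pow_succ, h1, one_mul]
    have hfs : ((2 * k + 1)! : ℝ) = ((2 * k + 1 : ℕ) : ℝ) * ((2 * k)! : ℝ) := by
      exact_mod_cast congrArg (Nat.cast (R := ℝ)) (Nat.factorial_succ (2 * k))
    rw [hgdef, hfdef]
    simp only [h1, h2]
    have hp1 : (0 : ℝ) < ((2 * k)! : ℝ) := hfac_pos _
    have hp2 : (0 : ℝ) < ((2 * k + 1)! : ℝ) := hfac_pos _
    rw [hfs]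
    field_simp
    push_cast; ring
  have hg : Summable g := by
    refine (he.add ho).congr fun k => (hg_eq k).symm
  have hsum_g : (∑' k : ℕ, g k) = Real.exp (-1) := by
    calc (∑' k : ℕ, g k) = ∑' k : ℕ, (f (2 * k) + f (2 * k + 1)) := tsum_congr hg_eq
    _ = (∑' k : ℕ, f (2 * k)) + ∑' k : ℕ, f (2 * k + 1) := Summable.tsum_add he ho
    _ = ∑' n : ℕ, f n := tsum_even_add_odd he ho
    _ = Real.exp (-1) := by
      rw [Real.exp_eq_exp_ℝ, NormedSpace.exp_eq_tsum_div]
  have hshift : (∑' k : ℕ, g (k + 1)) = Real.exp (-1) := by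
    have h0 : g 0 = 0 := by simp [hgdef]
    have := Summable.tsum_eq_zero_add hg
    rw [h0, zero_add] at this
    rw [← this, hsum_g]
  have hsummable : Summable fun k : ℕ => g (k + 1) := (summable_nat_add_iff 1).2 hg
  have hggg : (fun k : ℕ => g (k + 1))
      = fun k : ℕ => (2 * (k + 1) : ℝ) / ((2 * (k + 1) + 1)! : ℝ) := by
    funext k
    rw [hgdef]
    push_cast
    ring_nf
  rw [← hggg]
  exact ⟨hsummable, hshift⟩

end Aux

/-- For an i.i.d. sequence with continuous distribution, the events
"descent of even length `2ℓ` at `i`" (`ξ_i > ξ_{i+1} > ⋯ > ξ_{i+2ℓ-1} < ξ_{i+2ℓ}`) are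
pairwise disjoint, each has probability `2ℓ/(2ℓ+1)!`, and their union has probability
`e⁻¹`. -/
theorem even_descent_disjoint_and_prob (Ω : Type*) [MeasurableSpace Ω] (P : Measure Ω)
    [IsProbabilityMeasure P] (ξ : ℕ → Ω → ℝ) (μ : Measure ℝ)
    (hmeas : ∀ j, Measurable (ξ j))
    (hindep : iIndepFun ξ P)
    (hlaw : ∀ j, Measure.map (ξ j) P = μ)
    (hcont : ∀ x : ℝ, μ {x} = 0) (i : ℕ) :
    let D : ℕ → Set Ω := fun ℓ =>
      {ω | (∀ j : ℕ, j + 1 < 2 * ℓ → ξ (i + j + 1) ω < ξ (i + j) ω) ∧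
        ξ (i + 2 * ℓ - 1) ω < ξ (i + 2 * ℓ) ω}
    (∀ ℓ ℓ', 1 ≤ ℓ → 1 ≤ ℓ' → ℓ ≠ ℓ' → Disjoint (D ℓ) (D ℓ')) ∧
    (∀ ℓ, 1 ≤ ℓ → P (D ℓ) = (2 * ℓ : ENNReal) / ((2 * ℓ + 1)! : ENNReal)) ∧
    P (⋃ ℓ ∈ {ℓ : ℕ | 1 ≤ ℓ}, D ℓ) = ENNReal.ofReal (Real.exp (-1)) := by
  intro D
  haveI : IsProbabilityMeasure μ := by
    rw [← hlaw 0]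
    exact Measure.isProbabilityMeasure_map (hmeas 0).aemeasurable
  have hD : D = fun ℓ =>
      {ω | (∀ j : ℕ, j + 1 < 2 * ℓ → ξ (i + j + 1) ω < ξ (i + j) ω) ∧
        ξ (i + 2 * ℓ - 1) ω < ξ (i + 2 * ℓ) ω} := rfl
  -- disjointness (one-sided)
  have hdisj1 : ∀ ℓ ℓ', 1 ≤ ℓ → ℓ < ℓ' → Disjoint (D ℓ) (D ℓ') := by
    intro ℓ ℓ' hℓ hlt
    rw [Set.disjoint_left]
    rintro ω h1 h2
    rw [hD] at h1 h2
    obtain ⟨hc1, hc2⟩ := h1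
    obtain ⟨hc1', _⟩ := h2
    have hj := hc1' (2 * ℓ - 1) (by omega)
    have e1 : i + (2 * ℓ - 1) + 1 = i + 2 * ℓ := by omega
    have e2 : i + (2 * ℓ - 1) = i + 2 * ℓ - 1 := by omega
    rw [e1, e2] at hj
    exact absurd hc2 (not_lt.2 (le_of_lt hj))
  have part1 : ∀ ℓ ℓ', 1 ≤ ℓ → 1 ≤ ℓ' → ℓ ≠ ℓ' → Disjoint (D ℓ) (D ℓ') := by
    intro ℓ ℓ' hℓ hℓ' hne
    rcases hne.lt_or_gt with h | h
    · exact hdisj1 ℓ ℓ' hℓ h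
    · exact (hdisj1 ℓ' ℓ hℓ' h).symm
  -- the joint law machinery
  set T : (n : ℕ) → Ω → (Fin n → ℝ) := fun n ω k => ξ (i + k) ω with hT
  have hTmeas : ∀ n, Measurable (T n) := fun n =>
    measurable_pi_lambda _ fun k => hmeas _
  have hjoint : ∀ n, Measure.map (T n) P = Measure.pi fun _ : Fin n => μ := fun n =>
    EDaux_joint_law P ξ hmeas hindep hlaw i n
  -- the runs events
  set A : ℕ → Set Ω :=
    fun m => {ω | ∀ j : ℕ, j + 1 < m → ξ (i + j + 1) ω < ξ (i + j) ω} with hA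
  have hA_pre : ∀ m, A m = T m ⁻¹' EDaux_decSet m := by
    intro m
    ext ω
    simp only [hA, Set.mem_setOf_eq, Set.mem_preimage, EDaux_decSet]
    constructor
    · intro h a b hab
      exact EDaux_adj_anti (x := T m ω) (fun j hj => h j hj) a b hab
    · intro h j hj
      exact h ⟨j, Nat.lt_of_succ_lt hj⟩ ⟨j + 1, hj⟩ (by simp)
  have hA_prob : ∀ m, P (A m) = 1 / (m ! : ℝ≥0∞) := by
    intro m
    rw [hA_pre m, ← Measure.map_apply (hTmeas m) (EDaux_measurableSet_decSet m),
      hjoint m, EDaux_pi_decSet hcont m]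
  have hA_meas : ∀ m, MeasurableSet (A m) := by
    intro m
    rw [hA_pre m]
    exact (EDaux_measurableSet_decSet m).preimage (hTmeas m)
  -- the equality event is null
  have hEq : ∀ ℓ : ℕ, 1 ≤ ℓ →
      P {ω | ξ (i + 2 * ℓ - 1) ω = ξ (i + 2 * ℓ) ω} = 0 := by
    intro ℓ hℓ
    set n := 2 * ℓ + 1 with hn
    set a : Fin n := ⟨2 * ℓ - 1, by omega⟩ with ha
    set b : Fin n := ⟨2 * ℓ, by omega⟩ with hb
    have hab : a ≠ b := by
      simp only [ha, hb, ne_eq, Fin.mk.injEq]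
      omega
    have hpre : {ω | ξ (i + 2 * ℓ - 1) ω = ξ (i + 2 * ℓ) ω}
        = T n ⁻¹' {x : Fin n → ℝ | x a = x b} := by
      ext ω
      simp only [Set.mem_setOf_eq, Set.mem_preimage, hT, ha, hb]
      have e1 : i + (2 * ℓ - 1) = i + 2 * ℓ - 1 := by omega
      rw [e1]
    have hms : MeasurableSet {x : Fin n → ℝ | x a = x b} := by
      have : {x : Fin n → ℝ | x a = x b}
          = (fun x : Fin n → ℝ => x a - x b) ⁻¹' {0} := by
        ext x; simp [sub_eq_zero]
      rw [this]
      exact ((measurable_pi_apply a).sub (measurable_pi_apply b)) (measurableSet_singleton 0)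
    rw [hpre, ← Measure.map_apply (hTmeas n) hms, hjoint n,
      EDaux_pi_coord_eq_zero hcont n a b hab]
  -- part 2
  have part2 : ∀ ℓ, 1 ≤ ℓ → P (D ℓ) = (2 * ℓ : ENNReal) / ((2 * ℓ + 1)! : ENNReal) := by
    intro ℓ hℓ
    -- D ℓ and A (2ℓ+1) partition A (2ℓ) up to a null set
    have hDsub : D ℓ ⊆ A (2 * ℓ) := by
      intro ω hω; exact hω.1
    have hAsub : A (2 * ℓ + 1) ⊆ A (2 * ℓ) := by
      intro ω hω j hj
      exact hω j (by omega)
    have hA_succ_last : ∀ ω, ω ∈ A (2 * ℓ + 1) →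
        ξ (i + 2 * ℓ) ω < ξ (i + 2 * ℓ - 1) ω := by
      intro ω hω
      have := hω (2 * ℓ - 1) (by omega)
      have e1 : i + (2 * ℓ - 1) + 1 = i + 2 * ℓ := by omega
      have e2 : i + (2 * ℓ - 1) = i + 2 * ℓ - 1 := by omega
      rwa [e1, e2] at this
    have hsplit : A (2 * ℓ) ⊆ (D ℓ ∪ A (2 * ℓ + 1))
        ∪ {ω | ξ (i + 2 * ℓ - 1) ω = ξ (i + 2 * ℓ) ω} := by
      intro ω hω
      rcases lt_trichotomy (ξ (i + 2 * ℓ - 1) ω) (ξ (i + 2 * ℓ) ω) with h | h | h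
      · left; left; rw [hD]; exact ⟨hω, h⟩
      · right; exact h
      · left; right
        intro j hj
        rcases Nat.lt_or_ge (j + 1) (2 * ℓ) with hj' | hj'
        · exact hω j hj'
        · have hj2 : j = 2 * ℓ - 1 := by omega
          subst hj2
          have e1 : i + (2 * ℓ - 1) + 1 = i + 2 * ℓ := by omega
          have e2 : i + (2 * ℓ - 1) = i + 2 * ℓ - 1 := by omega
          rw [e1, e2]
          exact h
    have hdisjDA : Disjoint (D ℓ) (A (2 * ℓ + 1)) := by
      rw [Set.disjoint_left]
      rintro ω h1 h2
      rw [hD] at h1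
      exact absurd h1.2 (not_lt.2 (le_of_lt (hA_succ_last ω h2)))
    have hD_meas : MeasurableSet (D ℓ) := by
      have : D ℓ = A (2 * ℓ) ∩ {ω | ξ (i + 2 * ℓ - 1) ω < ξ (i + 2 * ℓ) ω} := by
        rw [hD]; rfl
      rw [this]
      exact (hA_meas _).inter (measurableSet_lt (hmeas _) (hmeas _))
    -- measure identity
    have hle1 : P (A (2 * ℓ)) ≤ P (D ℓ) + P (A (2 * ℓ + 1)) := by
      calc P (A (2 * ℓ)) ≤ P ((D ℓ ∪ A (2 * ℓ + 1))
          ∪ {ω | ξ (i + 2 * ℓ - 1) ω = ξ (i + 2 * ℓ) ω}) := measure_mono hsplit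
      _ ≤ P (D ℓ ∪ A (2 * ℓ + 1)) + P {ω | ξ (i + 2 * ℓ - 1) ω = ξ (i + 2 * ℓ) ω} :=
          measure_union_le _ _
      _ = P (D ℓ ∪ A (2 * ℓ + 1)) := by rw [hEq ℓ hℓ, add_zero]
      _ ≤ P (D ℓ) + P (A (2 * ℓ + 1)) := measure_union_le _ _
    have hge1 : P (D ℓ) + P (A (2 * ℓ + 1)) ≤ P (A (2 * ℓ)) := by
      rw [← measure_union hdisjDA (hA_meas _)]
      exact measure_mono (Set.union_subset hDsub hAsub)
    have hkey : P (D ℓ) + P (A (2 * ℓ + 1)) = P (A (2 * ℓ)) := le_antisymm hge1 hle1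
    rw [hA_prob (2 * ℓ + 1), hA_prob (2 * ℓ)] at hkey
    -- arithmetic in ℝ≥0∞
    have hfac : ((2 * ℓ + 1)! : ℝ≥0∞) = ((2 * ℓ + 1 : ℕ) : ℝ≥0∞) * ((2 * ℓ)! : ℝ≥0∞) := by
      rw [Nat.factorial_succ, Nat.cast_mul]
    have hne1 : ((2 * ℓ + 1 : ℕ) : ℝ≥0∞) ≠ 0 := Nat.cast_ne_zero.mpr (by omega)
    have hnt1 : ((2 * ℓ + 1 : ℕ) : ℝ≥0∞) ≠ ⊤ := ENNReal.natCast_ne_top _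
    have harith : (2 * ℓ : ℝ≥0∞) / ((2 * ℓ + 1)! : ℝ≥0∞) + 1 / ((2 * ℓ + 1)! : ℝ≥0∞)
        = (1 : ℝ≥0∞) / ((2 * ℓ)! : ℝ≥0∞) := by
      rw [ENNReal.div_add_div_same]
      have hnum : (2 * (ℓ : ℝ≥0∞) + 1) = ((2 * ℓ + 1 : ℕ) : ℝ≥0∞) := by push_cast; ring
      rw [hnum, hfac]
      calc ((2 * ℓ + 1 : ℕ) : ℝ≥0∞) / (((2 * ℓ + 1 : ℕ) : ℝ≥0∞) * ((2 * ℓ)! : ℝ≥0∞))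
          = (((2 * ℓ + 1 : ℕ) : ℝ≥0∞) * 1) / (((2 * ℓ + 1 : ℕ) : ℝ≥0∞) * ((2 * ℓ)! : ℝ≥0∞)) := by
            rw [mul_one]
      _ = 1 / ((2 * ℓ)! : ℝ≥0∞) := ENNReal.mul_div_mul_left _ _ hne1 hnt1
    rw [← harith] at hkey
    have hnt2 : (1 : ℝ≥0∞) / ((2 * ℓ + 1)! : ℝ≥0∞) ≠ ⊤ := by
      rw [one_div]
      exact ENNReal.inv_ne_top.2 (Nat.cast_ne_zero.2 (Nat.factorial_ne_zero _))
    have hkey2 : 1 / ((2 * ℓ + 1)! : ℝ≥0∞) + P (D ℓ)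
        = 1 / ((2 * ℓ + 1)! : ℝ≥0∞) + (2 * ℓ : ℝ≥0∞) / ((2 * ℓ + 1)! : ℝ≥0∞) :=
      calc 1 / ((2 * ℓ + 1)! : ℝ≥0∞) + P (D ℓ)
          = P (D ℓ) + 1 / ((2 * ℓ + 1)! : ℝ≥0∞) := add_comm _ _
      _ = (2 * ℓ : ℝ≥0∞) / ((2 * ℓ + 1)! : ℝ≥0∞) + 1 / ((2 * ℓ + 1)! : ℝ≥0∞) := hkey
      _ = 1 / ((2 * ℓ + 1)! : ℝ≥0∞) + (2 * ℓ : ℝ≥0∞) / ((2 * ℓ + 1)! : ℝ≥0∞) := add_comm _ _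
    exact (ENNReal.add_right_inj hnt2).mp hkey2
  -- part 3
  refine ⟨part1, part2, ?_⟩
  have hD_meas : ∀ ℓ, MeasurableSet (D ℓ) := by
    intro ℓ
    have : D ℓ = (⋂ (j : ℕ) (_ : j + 1 < 2 * ℓ), {ω | ξ (i + j + 1) ω < ξ (i + j) ω})
        ∩ {ω | ξ (i + 2 * ℓ - 1) ω < ξ (i + 2 * ℓ) ω} := by
      rw [hD]; ext ω; simp [Set.mem_iInter]
    rw [this]
    exact (MeasurableSet.iInter fun j => MeasurableSet.iInter fun _ =>
      measurableSet_lt (hmeas _) (hmeas _)).inter (measurableSet_lt (hmeas _) (hmeas _))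
  have hUeq : (⋃ ℓ ∈ {ℓ : ℕ | 1 ≤ ℓ}, D ℓ) = ⋃ k : ℕ, D (k + 1) := by
    ext ω
    simp only [Set.mem_iUnion, Set.mem_setOf_eq]
    constructor
    · rintro ⟨ℓ, hℓ, h⟩
      exact ⟨ℓ - 1, by rwa [Nat.sub_add_cancel hℓ]⟩
    · rintro ⟨k, h⟩
      exact ⟨k + 1, by omega, h⟩
  rw [hUeq]
  have hpd : Pairwise (Function.onFun Disjoint fun k : ℕ => D (k + 1)) := by
    intro k k' hne
    exact part1 (k + 1) (k' + 1) (by omega) (by omega) (by omega)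
  rw [measure_iUnion hpd fun k => hD_meas (k + 1)]
  have hterm : ∀ k : ℕ, P (D (k + 1))
      = ENNReal.ofReal ((2 * (k + 1) : ℝ) / ((2 * (k + 1) + 1)! : ℝ)) := by
    intro k
    rw [part2 (k + 1) (by omega)]
    have hpos : (0 : ℝ) < ((2 * (k + 1) + 1)! : ℝ) := by
      exact_mod_cast Nat.factorial_pos _
    rw [ENNReal.ofReal_div_of_pos hpos]
    have hnum : (2 * (k + 1) : ℝ) = ((2 * (k + 1) : ℕ) : ℝ) := by push_cast; ring
    rw [hnum, ENNReal.ofReal_natCast, ENNReal.ofReal_natCast]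
    congr 1
    push_cast
    ring
  obtain ⟨hsummable, hsum⟩ := EDaux_real_sum
  calc (∑' k : ℕ, P (D (k + 1)))
      = ∑' k : ℕ, ENNReal.ofReal ((2 * (k + 1) : ℝ) / ((2 * (k + 1) + 1)! : ℝ)) :=
        tsum_congr hterm
  _ = ENNReal.ofReal (∑' k : ℕ, (2 * (k + 1) : ℝ) / ((2 * (k + 1) + 1)! : ℝ)) :=
      (ENNReal.ofReal_tsum_of_nonneg (fun k => by positivity) hsummable).symm
  _ = ENNReal.ofReal (Real.exp (-1)) := by rw [hsum]
end

section
/- For i.i.d. continuous random variables ξ₁, …, ξ_{n−1} with n ≥ 2, letting m be the position of the leftmost strict local minimum (ξ_{i−1} > ξ_i < ξ_{i+1}) in {2, …, n−2}, we have P(m ≥ i) ≤ (2/3)^{⌊i/3⌋} for all i, and consequently E[m · 1_{m<∞}] ≤ 11. -/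
open MeasureTheory ProbabilityTheory

lemma triple_min_ge (μ : Measure ℝ) [IsProbabilityMeasure μ] (hcont : ∀ x : ℝ, μ {x} = 0) :
    1/3 ≤ μ.prod (μ.prod μ) {p : ℝ × ℝ × ℝ | p.2.1 < p.1 ∧ p.2.1 < p.2.2} := by
  set ν := μ.prod (μ.prod μ) with hν
  set A : Set (ℝ × ℝ × ℝ) := {p | p.2.1 < p.1 ∧ p.2.1 < p.2.2} with hA
  set B : Set (ℝ × ℝ × ℝ) := {p | p.1 < p.2.1 ∧ p.1 < p.2.2} with hB
  set C : Set (ℝ × ℝ × ℝ) := {p | p.2.2 < p.1 ∧ p.2.2 < p.2.1} with hC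
  have mA : MeasurableSet A :=
    (measurableSet_lt (measurable_snd.fst) measurable_fst).inter
      (measurableSet_lt (measurable_snd.fst) (measurable_snd.snd))
  have hdiag : (μ.prod μ) {q : ℝ × ℝ | q.1 = q.2} = 0 := by
    rw [Measure.prod_apply (measurableSet_eq_fun measurable_fst measurable_snd)]
    have h : ∀ x : ℝ, μ (Prod.mk x ⁻¹' {q : ℝ × ℝ | q.1 = q.2}) = 0 := by
      intro x
      have he : Prod.mk x ⁻¹' {q : ℝ × ℝ | q.1 = q.2} = {x} := by ext y; simp [eq_comm]
      rw [he]; exact hcont x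
    exact (lintegral_congr h).trans lintegral_zero
  have hD1 : ν {p : ℝ × ℝ × ℝ | p.1 = p.2.1} = 0 := by
    rw [hν, Measure.prod_apply (measurableSet_eq_fun measurable_fst measurable_snd.fst)]
    have h : ∀ x : ℝ, (μ.prod μ) (Prod.mk x ⁻¹' {p : ℝ × ℝ × ℝ | p.1 = p.2.1}) = 0 := by
      intro x
      have he : Prod.mk x ⁻¹' {p : ℝ × ℝ × ℝ | p.1 = p.2.1} = Prod.fst ⁻¹' {x} := by
        ext q; simp [eq_comm]
      rw [he, ← Set.prod_univ, Measure.prod_prod, hcont x, zero_mul]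
    exact (lintegral_congr h).trans lintegral_zero
  have hD2 : ν {p : ℝ × ℝ × ℝ | p.1 = p.2.2} = 0 := by
    rw [hν, Measure.prod_apply (measurableSet_eq_fun measurable_fst measurable_snd.snd)]
    have h : ∀ x : ℝ, (μ.prod μ) (Prod.mk x ⁻¹' {p : ℝ × ℝ × ℝ | p.1 = p.2.2}) = 0 := by
      intro x
      have he : Prod.mk x ⁻¹' {p : ℝ × ℝ × ℝ | p.1 = p.2.2} = Prod.snd ⁻¹' {x} := by
        ext q; simp [eq_comm]
      rw [he, ← Set.univ_prod, Measure.prod_prod, hcont x, mul_zero]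
    exact (lintegral_congr h).trans lintegral_zero
  have hD3 : ν {p : ℝ × ℝ × ℝ | p.2.1 = p.2.2} = 0 := by
    rw [hν, Measure.prod_apply (measurableSet_eq_fun measurable_snd.fst measurable_snd.snd)]
    have h : ∀ x : ℝ, (μ.prod μ) (Prod.mk x ⁻¹' {p : ℝ × ℝ × ℝ | p.2.1 = p.2.2}) = 0 := by
      intro x
      have he : Prod.mk x ⁻¹' {p : ℝ × ℝ × ℝ | p.2.1 = p.2.2} = {q : ℝ × ℝ | q.1 = q.2} := by
        ext q; simp
      rw [he]; exact hdiag
    exact (lintegral_congr h).trans lintegral_zero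
  have hT1 : MeasurePreserving (fun p : ℝ × ℝ × ℝ => (p.2.1, (p.1, p.2.2))) ν ν := by
    have h := (measurePreserving_prodAssoc μ μ μ).comp
      (((Measure.measurePreserving_swap (μ := μ) (ν := μ)).prod (MeasurePreserving.id μ)).comp
        ((measurePreserving_prodAssoc μ μ μ).symm MeasurableEquiv.prodAssoc))
    exact h
  have hT2 : MeasurePreserving (fun p : ℝ × ℝ × ℝ => (p.1, (p.2.2, p.2.1))) ν ν := by
    have h := (MeasurePreserving.id μ).prod (Measure.measurePreserving_swap (μ := μ) (ν := μ))
    exact h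
  have hBA : ν B = ν A := by
    have h := hT1.measure_preimage mA.nullMeasurableSet
    have hpre : (fun p : ℝ × ℝ × ℝ => (p.2.1, (p.1, p.2.2))) ⁻¹' A = B := rfl
    rw [hpre] at h; exact h
  have hCA : ν C = ν A := by
    have h := hT2.measure_preimage mA.nullMeasurableSet
    have hpre : (fun p : ℝ × ℝ × ℝ => (p.1, (p.2.2, p.2.1))) ⁻¹' A = C := rfl
    rw [hpre] at h; exact h
  have hcover : (Set.univ : Set (ℝ × ℝ × ℝ)) ⊆ A ∪ B ∪ C ∪
      ({p : ℝ × ℝ × ℝ | p.1 = p.2.1} ∪ {p : ℝ × ℝ × ℝ | p.1 = p.2.2} ∪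
       {p : ℝ × ℝ × ℝ | p.2.1 = p.2.2}) := by
    rintro ⟨x, y, z⟩ -
    simp only [Set.mem_union, hA, hB, hC, Set.mem_setOf_eq]
    rcases lt_trichotomy x y with h1 | h1 | h1 <;>
      rcases lt_trichotomy x z with h2 | h2 | h2 <;>
        rcases lt_trichotomy y z with h3 | h3 | h3 <;>
          first
            | tauto
            | (exfalso; linarith)
  have h1 : (1 : ENNReal) ≤ 3 * ν A := by
    have hu := measure_mono (μ := ν) hcover
    rw [measure_univ] at hu
    have hle : ν (A ∪ B ∪ C ∪
        ({p : ℝ × ℝ × ℝ | p.1 = p.2.1} ∪ {p : ℝ × ℝ × ℝ | p.1 = p.2.2} ∪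
         {p : ℝ × ℝ × ℝ | p.2.1 = p.2.2})) ≤ ν A + ν B + ν C := by
      refine le_trans (measure_union_le _ _) ?_
      have hz : ν ({p : ℝ × ℝ × ℝ | p.1 = p.2.1} ∪ {p : ℝ × ℝ × ℝ | p.1 = p.2.2} ∪
          {p : ℝ × ℝ × ℝ | p.2.1 = p.2.2}) = 0 :=
        measure_union_null (measure_union_null hD1 hD2) hD3
      rw [hz, add_zero]
      refine le_trans (measure_union_le _ _) ?_
      gcongr
      exact measure_union_le _ _
    calc (1 : ENNReal) ≤ ν A + ν B + ν C := le_trans hu hle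
      _ = 3 * ν A := by rw [hBA, hCA]; ring
  calc (1 : ENNReal)/3 ≤ (3 * ν A)/3 := by gcongr
    _ = ν A := by
        rw [mul_comm, mul_div_assoc]
        simp [ENNReal.div_self]


lemma geom_floor_sum_bound : ∀ N : ℕ, ∑ i ∈ Finset.Icc 1 N, (2/3 : ℝ)^(i/3)
    ≤ 8 - (8 - (N % 3 : ℕ)) * (2/3 : ℝ)^(N/3) := by
  intro N
  induction N with
  | zero => norm_num
  | succ N ih =>
    rw [Finset.sum_Icc_succ_top (by omega : 1 ≤ N + 1)]
    have hp : (0:ℝ) < (2/3 : ℝ)^(N/3) := by positivity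
    have h3 : N % 3 = 0 ∨ N % 3 = 1 ∨ N % 3 = 2 := by omega
    rcases h3 with h | h | h
    · have e1 : (N+1)/3 = N/3 := by omega
      have e2 : (N+1) % 3 = 1 := by omega
      rw [h] at ih
      rw [e1, e2]
      push_cast at ih ⊢
      linarith
    · have e1 : (N+1)/3 = N/3 := by omega
      have e2 : (N+1) % 3 = 2 := by omega
      rw [h] at ih
      rw [e1, e2]
      push_cast at ih ⊢
      linarith
    · have e1 : (N+1)/3 = N/3 + 1 := by omega
      have e2 : (N+1) % 3 = 0 := by omega
      rw [h] at ih
      rw [e1, e2, pow_succ]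
      push_cast at ih ⊢
      nlinarith

/-- For i.i.d. continuous `ξ₁, …, ξ_{n-1}`, let `m` be the position of the leftmost strict
local minimum in `{2, …, n-2}` (`m = ∞`, i.e. undefined, if there is none). Then
`P(m ≥ i) ≤ (2/3)^⌊i/3⌋` and `E[m ⬝ 1_{m < ∞}] ≤ 11`. -/
theorem leftmost_local_min_bounds (Ω : Type*) [MeasurableSpace Ω] (P : Measure Ω)
    [IsProbabilityMeasure P] (n : ℕ) (hn : 2 ≤ n) (ξ : ℕ → Ω → ℝ) (μ : Measure ℝ)
    (hmeas : ∀ i, Measurable (ξ i))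
    (hindep : iIndepFun ξ P)
    (hlaw : ∀ i, Measure.map (ξ i) P = μ)
    (hcont : ∀ x : ℝ, μ {x} = 0) :
    let S : Ω → Set ℕ := fun ω =>
      {i : ℕ | 2 ≤ i ∧ i ≤ n - 2 ∧ ξ i ω < ξ (i - 1) ω ∧ ξ i ω < ξ (i + 1) ω}
    (∀ i : ℕ, i ≤ n - 1 →
      P {ω | ∀ j ∈ S ω, i ≤ j} ≤ (2 / 3 : ENNReal) ^ (i / 3)) ∧
    ∫ ω, Set.indicator {ω' | (S ω').Nonempty} (fun ω' => ((sInf (S ω') : ℕ) : ℝ)) ω ∂P ≤ 11 := by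
  intro S
  haveI hμprob : IsProbabilityMeasure μ := by
    have h := Measure.isProbabilityMeasure_map (μ := P) (f := ξ 0) (hmeas 0).aemeasurable
    rwa [hlaw 0] at h
  -- block events
  set A : ℕ → Set Ω := fun k =>
    {ω | ξ (3*k+2) ω < ξ (3*k+1) ω ∧ ξ (3*k+2) ω < ξ (3*k+3) ω} with hAdef
  have hAmeas : ∀ k, MeasurableSet (A k) := fun k =>
    (measurableSet_lt (hmeas _) (hmeas _)).inter (measurableSet_lt (hmeas _) (hmeas _))
  have hA3 : ∀ k, (1:ENNReal)/3 ≤ P (A k) := by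
    intro k
    have hbc : IndepFun (ξ (3*k+2)) (ξ (3*k+3)) P := hindep.indepFun (by omega)
    have hpair : P.map (fun ω => (ξ (3*k+2) ω, ξ (3*k+3) ω)) = μ.prod μ := by
      rw [(indepFun_iff_map_prod_eq_prod_map_map (hmeas _).aemeasurable
        (hmeas _).aemeasurable).mp hbc, hlaw, hlaw]
    have hip : IndepFun (ξ (3*k+1)) (fun ω => (ξ (3*k+2) ω, ξ (3*k+3) ω)) P :=
      (hindep.indepFun_prodMk hmeas (3*k+2) (3*k+3) (3*k+1) (by omega) (by omega)).symm
    have htrip : P.map (fun ω => (ξ (3*k+1) ω, (ξ (3*k+2) ω, ξ (3*k+3) ω)))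
        = μ.prod (μ.prod μ) := by
      rw [(indepFun_iff_map_prod_eq_prod_map_map (hmeas _).aemeasurable
        ((hmeas _).prodMk (hmeas _)).aemeasurable).mp hip, hlaw, hpair]
    have hmAset : MeasurableSet {p : ℝ × ℝ × ℝ | p.2.1 < p.1 ∧ p.2.1 < p.2.2} :=
      (measurableSet_lt (measurable_snd.fst) measurable_fst).inter
        (measurableSet_lt (measurable_snd.fst) (measurable_snd.snd))
    have h13 := triple_min_ge μ hcont
    rw [← htrip, Measure.map_apply ((hmeas _).prodMk ((hmeas _).prodMk (hmeas _)))
      hmAset] at h13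
    exact h13
  have h23 : (1:ENNReal) - 1/3 = 2/3 := by
    have hadd : (2:ENNReal)/3 + 1/3 = 1 := by
      rw [ENNReal.div_add_div_same]
      have h3 : (2+1 : ENNReal) = 3 := by norm_num
      rw [h3]
      exact ENNReal.div_self (by norm_num) (by norm_num)
    exact ENNReal.sub_eq_of_eq_add (by simp [ENNReal.div_eq_top]) hadd.symm
  have hAc : ∀ k, P (A k)ᶜ ≤ 2/3 := by
    intro k
    rw [prob_compl_eq_one_sub (hAmeas k)]
    calc 1 - P (A k) ≤ 1 - 1/3 := tsub_le_tsub_left (hA3 k) 1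
      _ = 2/3 := h23
  -- key induction
  have key : ∀ K : ℕ, P (⋂ k ∈ Finset.range K, (A k)ᶜ) ≤ (2/3 : ENNReal)^K := by
    intro K
    induction K with
    | zero => simp
    | succ K ih =>
      have hdisj : Disjoint (Finset.Icc 1 (3*K)) ({3*K+1, 3*K+2, 3*K+3} : Finset ℕ) := by
        simp only [Finset.disjoint_left, Finset.mem_Icc, Finset.mem_insert, Finset.mem_singleton]
        intro a ha hb
        omega
      have hIF := hindep.indepFun_finset (Finset.Icc 1 (3*K)) {3*K+1, 3*K+2, 3*K+3} hdisj hmeas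
      set M : Set ((Finset.Icc 1 (3*K) : Finset ℕ) → ℝ) :=
        ⋂ k, ⋂ (_h : k < K),
          ({v | v ⟨3*k+2, by simp only [Finset.mem_Icc]; omega⟩
              < v ⟨3*k+1, by simp only [Finset.mem_Icc]; omega⟩} ∩
           {v | v ⟨3*k+2, by simp only [Finset.mem_Icc]; omega⟩
              < v ⟨3*k+3, by simp only [Finset.mem_Icc]; omega⟩})ᶜ with hM
      have hMmeas : MeasurableSet M := by
        refine MeasurableSet.iInter fun k => MeasurableSet.iInter fun hk => MeasurableSet.compl
          (MeasurableSet.inter ?_ ?_) <;>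
        exact measurableSet_lt (measurable_pi_apply _) (measurable_pi_apply _)
      set N : Set (({3*K+1, 3*K+2, 3*K+3} : Finset ℕ) → ℝ) :=
        {v | v ⟨3*K+2, by simp⟩ < v ⟨3*K+1, by simp⟩} ∩
          {v | v ⟨3*K+2, by simp⟩ < v ⟨3*K+3, by simp⟩} with hN
      have hNmeas : MeasurableSet N := by
        refine MeasurableSet.inter ?_ ?_ <;>
        exact measurableSet_lt (measurable_pi_apply _) (measurable_pi_apply _)
      have hFM : (fun ω (i : (Finset.Icc 1 (3*K) : Finset ℕ)) => ξ i ω) ⁻¹' M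
          = ⋂ k ∈ Finset.range K, (A k)ᶜ := by
        ext ω
        simp only [hM, Set.mem_preimage, Set.mem_iInter, Set.mem_setOf_eq, Set.mem_compl_iff,
          Set.mem_inter_iff, Finset.mem_range, hAdef]
      have hGN : (fun ω (i : ({3*K+1, 3*K+2, 3*K+3} : Finset ℕ)) => ξ i ω) ⁻¹' N = A K := rfl
      have hsplit : (⋂ k ∈ Finset.range (K+1), (A k)ᶜ)
          = ((fun ω (i : (Finset.Icc 1 (3*K) : Finset ℕ)) => ξ i ω) ⁻¹' M) ∩
            ((fun ω (i : ({3*K+1, 3*K+2, 3*K+3} : Finset ℕ)) => ξ i ω) ⁻¹' Nᶜ) := by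
        rw [Set.preimage_compl, hFM, hGN, Finset.range_add_one, Finset.set_biInter_insert,
          Set.inter_comm]
      rw [hsplit, hIF.measure_inter_preimage_eq_mul _ _ hMmeas hNmeas.compl,
        Set.preimage_compl, hFM, hGN]
      calc P (⋂ k ∈ Finset.range K, (A k)ᶜ) * P (A K)ᶜ
          ≤ (2/3 : ENNReal)^K * (2/3) := mul_le_mul' ih (hAc K)
        _ = (2/3 : ENNReal)^(K+1) := (pow_succ _ _).symm
  -- Part 1
  set E : ℕ → Set Ω := fun i => {ω | ∀ j ∈ S ω, i ≤ j} with hE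
  have part1 : ∀ i : ℕ, i ≤ n - 1 → P (E i) ≤ (2/3 : ENNReal) ^ (i/3) := by
    intro i hi
    refine le_trans (measure_mono ?_) (key (i/3))
    intro ω hω
    simp only [Set.mem_iInter, Set.mem_compl_iff, Finset.mem_range]
    intro k hk hak
    have hj : (3*k+2) ∈ S ω := by
      refine ⟨by omega, by omega, ?_, ?_⟩
      · have e : 3*k+2-1 = 3*k+1 := by omega
        rw [e]; exact hak.1
      · exact hak.2
    have := hω _ hj
    omega
  refine ⟨part1, ?_⟩
  -- Part 2
  have hEmeas : ∀ i, MeasurableSet (E i) := by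
    intro i
    have hrw : E i = ⋂ j, ⋂ (_ : j < i),
        ({ω | 2 ≤ j ∧ j ≤ n - 2 ∧ ξ j ω < ξ (j-1) ω ∧ ξ j ω < ξ (j+1) ω})ᶜ := by
      ext ω
      simp only [hE, Set.mem_setOf_eq, Set.mem_iInter, Set.mem_compl_iff]
      constructor
      · intro h j hj hmem
        have := h j hmem
        omega
      · intro h j hj
        by_contra hij
        exact h j (by omega) hj
    rw [hrw]
    refine MeasurableSet.iInter fun j => MeasurableSet.iInter fun _ => MeasurableSet.compl ?_
    by_cases hc : 2 ≤ j ∧ j ≤ n - 2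
    · have he : {ω | 2 ≤ j ∧ j ≤ n - 2 ∧ ξ j ω < ξ (j-1) ω ∧ ξ j ω < ξ (j+1) ω}
          = {ω | ξ j ω < ξ (j-1) ω} ∩ {ω | ξ j ω < ξ (j+1) ω} := by
        ext ω; simp [hc.1, hc.2]
      rw [he]
      exact (measurableSet_lt (hmeas _) (hmeas _)).inter (measurableSet_lt (hmeas _) (hmeas _))
    · have he : {ω | 2 ≤ j ∧ j ≤ n - 2 ∧ ξ j ω < ξ (j-1) ω ∧ ξ j ω < ξ (j+1) ω} = ∅ :=
        Set.eq_empty_iff_forall_notMem.mpr fun ω h => hc ⟨h.1, h.2.1⟩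
      rw [he]
      exact MeasurableSet.empty
  set g : Ω → ℝ := fun ω => ∑ i ∈ Finset.Icc 1 (n-2), (E i).indicator (fun _ => (1:ℝ)) ω with hg
  have hgint : Integrable g P :=
    integrable_finset_sum _ (fun i _ => (integrable_const (1:ℝ)).indicator (hEmeas i))
  have hnonneg : ∀ ω, 0 ≤ Set.indicator {ω' | (S ω').Nonempty}
      (fun ω' => ((sInf (S ω') : ℕ) : ℝ)) ω :=
    fun ω => Set.indicator_nonneg (fun ω' _ => by positivity) ω
  have hfg : ∀ ω, Set.indicator {ω' | (S ω').Nonempty}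
      (fun ω' => ((sInf (S ω') : ℕ) : ℝ)) ω ≤ g ω := by
    intro ω
    by_cases hne : ω ∈ {ω' | (S ω').Nonempty}
    · rw [Set.indicator_of_mem hne]
      have hm : sInf (S ω) ∈ S ω := Nat.sInf_mem hne
      have hmn : sInf (S ω) ≤ n - 2 := hm.2.1
      have hone : ∀ i ∈ Finset.Icc 1 (sInf (S ω)), (E i).indicator (fun _ => (1:ℝ)) ω = 1 := by
        intro i hi
        rw [Set.indicator_of_mem]
        exact fun j hj => le_trans (Finset.mem_Icc.mp hi).2 (Nat.sInf_le hj)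
      calc ((sInf (S ω) : ℕ) : ℝ) = ∑ _i ∈ Finset.Icc 1 (sInf (S ω)), (1:ℝ) := by
            rw [Finset.sum_const, Nat.card_Icc]
            simp
        _ = ∑ i ∈ Finset.Icc 1 (sInf (S ω)), (E i).indicator (fun _ => (1:ℝ)) ω :=
            (Finset.sum_congr rfl hone).symm
        _ ≤ g ω := Finset.sum_le_sum_of_subset_of_nonneg
            (Finset.Icc_subset_Icc_right hmn)
            (fun i _ _ => Set.indicator_nonneg (fun _ _ => zero_le_one) ω)
    · rw [Set.indicator_of_notMem hne]
      exact Finset.sum_nonneg fun i _ => Set.indicator_nonneg (fun _ _ => zero_le_one) ω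
  have hint : ∫ ω, Set.indicator {ω' | (S ω').Nonempty}
      (fun ω' => ((sInf (S ω') : ℕ) : ℝ)) ω ∂P ≤ ∫ ω, g ω ∂P :=
    integral_mono_of_nonneg (Filter.Eventually.of_forall hnonneg) hgint
      (Filter.Eventually.of_forall hfg)
  have hgval : ∫ ω, g ω ∂P = ∑ i ∈ Finset.Icc 1 (n-2), (P (E i)).toReal := by
    rw [hg, integral_finset_sum _ (fun i _ => (integrable_const (1:ℝ)).indicator (hEmeas i))]
    refine Finset.sum_congr rfl fun i _ => ?_
    rw [integral_indicator_const (1:ℝ) (hEmeas i), smul_eq_mul, mul_one]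
    rfl
  have h23top : (2/3 : ENNReal) ≠ ⊤ := by
    simp [ENNReal.div_eq_top]
  have hterm : ∀ i ∈ Finset.Icc 1 (n-2), (P (E i)).toReal ≤ (2/3 : ℝ)^(i/3) := by
    intro i hi
    have hi' : i ≤ n - 1 := by
      have := (Finset.mem_Icc.mp hi).2
      omega
    have h := part1 i hi'
    have ht : (P (E i)).toReal ≤ ((2/3 : ENNReal)^(i/3)).toReal :=
      ENNReal.toReal_mono (ENNReal.pow_ne_top h23top) h
    calc (P (E i)).toReal ≤ ((2/3 : ENNReal)^(i/3)).toReal := ht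
      _ = (2/3 : ℝ)^(i/3) := by
          rw [ENNReal.toReal_pow, ENNReal.toReal_div]
          norm_num
  have hsum : ∑ i ∈ Finset.Icc 1 (n-2), (2/3 : ℝ)^(i/3) ≤ 8 := by
    have h := geom_floor_sum_bound (n-2)
    have h1 : (0:ℝ) ≤ (8 - ((n-2) % 3 : ℕ)) * (2/3 : ℝ)^((n-2)/3) := by
      have : ((n-2) % 3 : ℕ) ≤ 2 := by omega
      have hc : ((((n-2) % 3 : ℕ)) : ℝ) ≤ 2 := by exact_mod_cast this
      have hpw : (0:ℝ) ≤ (2/3 : ℝ)^((n-2)/3) := by positivity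
      nlinarith
    linarith
  calc ∫ ω, Set.indicator {ω' | (S ω').Nonempty}
        (fun ω' => ((sInf (S ω') : ℕ) : ℝ)) ω ∂P ≤ ∫ ω, g ω ∂P := hint
    _ = ∑ i ∈ Finset.Icc 1 (n-2), (P (E i)).toReal := hgval
    _ ≤ ∑ i ∈ Finset.Icc 1 (n-2), (2/3 : ℝ)^(i/3) := Finset.sum_le_sum hterm
    _ ≤ 8 := hsum
    _ ≤ 11 := by norm_num
end
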